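/- Let G be the visibility graph of a 1.5D terrain with left-right order ≺, and let A, B ⊆ V(G) be sets with a ≺ b for every a ∈ A and b ∈ B. Then there do not exist vertices a_1 ≺ a_2 ≺ a_3 ≺ a_4 in A and b_1 ≺ b_2 ≺ b_3 ≺ b_4 in B such that either (a_i is adjacent to b_j iff (i,j) ∈ {(1,1),(3,2),(2,3),(4,4)}) or (a_i is adjacent to b_j iff (i,j) ∉ {(1,1),(3,2),(2,3),(4,4)}). (Equivalently, for such A and B the biadjacency matrix Adj_≺(G⟨A,B⟩) never equals the universal pattern M_2^0 or its complement M_2^1.) -/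

import Mathlib

/-- A 1.5D terrain: points `p_1, …, p_n` in the plane with strictly increasing
`x`-coordinates. -/
structure Terrain (n : ℕ) where
  pt : Fin n → ℝ × ℝ
  xmono : StrictMono fun i : Fin n => (pt i).1

/-- Vertices `i` and `j` of a terrain see each other: they are distinct and every terrain
vertex between them lies on or below the closed segment joining them. -/
def Terrain.Sees {n : ℕ} (T : Terrain n) (i j : Fin n) : Prop :=
  i ≠ j ∧ ∀ k : Fin n, min i j ≤ k → k ≤ max i j →
    ∃ z ∈ segment ℝ (T.pt (min i j)) (T.pt (max i j)),
      z.1 = (T.pt k).1 ∧ (T.pt k).2 ≤ z.2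

/-- The visibility graph of a terrain. -/
def Terrain.visibilityGraph {n : ℕ} (T : Terrain n) : SimpleGraph (Fin n) where
  Adj i j := T.Sees i j
  symm := ⟨by
    intro i j h
    refine ⟨h.1.symm, ?_⟩
    rw [min_comm j i, max_comm j i]
    exact h.2⟩
  loopless := ⟨fun i h => h.1 rfl⟩

private lemma seg_char (P Q : ℝ × ℝ) (hx : P.1 < Q.1) (x y : ℝ)
    (h1 : P.1 ≤ x) (h2 : x ≤ Q.1) :
    (∃ z ∈ segment ℝ P Q, z.1 = x ∧ y ≤ z.2) ↔
      y * (Q.1 - P.1) ≤ P.2 * (Q.1 - x) + Q.2 * (x - P.1) := by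
  have hd : (0:ℝ) < Q.1 - P.1 := by linarith
  constructor
  · rintro ⟨z, ⟨u, v, hu, hv, huv, rfl⟩, hzx, hzy⟩
    simp only [Prod.fst_add, Prod.snd_add, Prod.smul_fst, Prod.smul_snd,
      smul_eq_mul] at hzx hzy
    have key : P.2 * (Q.1 - x) + Q.2 * (x - P.1) - y * (Q.1 - P.1)
        = (u * P.2 + v * Q.2 - y) * (Q.1 - P.1) := by
      linear_combination (P.2 - Q.2) * hzx + (Q.2 * P.1 - P.2 * Q.1) * huv
    nlinarith [mul_nonneg (by linarith : (0:ℝ) ≤ u * P.2 + v * Q.2 - y) hd.le]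
  · intro h
    set t : ℝ := (x - P.1) / (Q.1 - P.1) with ht
    have ht0 : 0 ≤ t := div_nonneg (by linarith) hd.le
    have ht1 : t ≤ 1 := by rw [ht, div_le_one hd]; linarith
    refine ⟨(1 - t) • P + t • Q, ⟨1 - t, t, by linarith, ht0, by ring, rfl⟩, ?_, ?_⟩
    · show (1 - t) * P.1 + t * Q.1 = x
      rw [ht]; field_simp; ring
    · show y ≤ (1 - t) * P.2 + t * Q.2
      have : (1 - t) * P.2 + t * Q.2
          = (P.2 * (Q.1 - x) + Q.2 * (x - P.1)) / (Q.1 - P.1) := by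
        rw [ht]; field_simp; ring
      rw [this, le_div_iff₀ hd]
      linarith

private lemma key_ineq1 (xp xq xr xs x yp yq yr ys y : ℝ)
    (h1 : xp < xq) (h2 : xq < xr) (h3 : xr < xs) (hx1 : xp ≤ x) (hx2 : x ≤ xr)
    (H1 : yq * (xr - xp) ≤ yp * (xr - xq) + yr * (xq - xp))
    (H2 : yr * (xs - xq) ≤ yq * (xs - xr) + ys * (xr - xq))
    (HK : y * (xr - xp) ≤ yp * (xr - x) + yr * (x - xp)) :
    y * (xs - xp) ≤ yp * (xs - x) + ys * (x - xp) := by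
  have hS1 : 0 ≤ yp * (xr - xq) + yr * (xq - xp) - yq * (xr - xp) := by linarith
  have hS2 : 0 ≤ yq * (xs - xr) + ys * (xr - xq) - yr * (xs - xq) := by linarith
  have hSK : 0 ≤ yp * (xr - x) + yr * (x - xp) - y * (xr - xp) := by linarith
  have hD : (0:ℝ) < (xr - xp) * (xr - xq) := by nlinarith
  have key : (yp * (xs - x) + ys * (x - xp) - y * (xs - xp)) * ((xr - xp) * (xr - xq))
      = ((yq * (xs - xr) + ys * (xr - xq) - yr * (xs - xq)) * (xr - xp)
          + (yp * (xr - xq) + yr * (xq - xp) - yq * (xr - xp)) * (xs - xr)) * (x - xp)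
        + (yp * (xr - x) + yr * (x - xp) - y * (xr - xp)) * ((xs - xp) * (xr - xq)) := by
    ring
  have hnn : 0 ≤ (yp * (xs - x) + ys * (x - xp) - y * (xs - xp)) * ((xr - xp) * (xr - xq)) := by
    rw [key]
    have t1 : 0 ≤ ((yq * (xs - xr) + ys * (xr - xq) - yr * (xs - xq)) * (xr - xp)
        + (yp * (xr - xq) + yr * (xq - xp) - yq * (xr - xp)) * (xs - xr)) * (x - xp) :=
      mul_nonneg (add_nonneg (mul_nonneg hS2 (by linarith)) (mul_nonneg hS1 (by linarith)))
        (by linarith)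
    have t2 : 0 ≤ (yp * (xr - x) + yr * (x - xp) - y * (xr - xp)) * ((xs - xp) * (xr - xq)) :=
      mul_nonneg hSK (mul_nonneg (by linarith) (by linarith))
    linarith
  nlinarith [hnn, hD]

private lemma key_ineq2 (xp xq xr xs x yp yq yr ys y : ℝ)
    (h1 : xp < xq) (h2 : xq < xr) (h3 : xr < xs) (hx1 : xq ≤ x) (hx2 : x ≤ xs)
    (H1 : yq * (xr - xp) ≤ yp * (xr - xq) + yr * (xq - xp))
    (H2 : yr * (xs - xq) ≤ yq * (xs - xr) + ys * (xr - xq))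
    (HK : y * (xs - xq) ≤ yq * (xs - x) + ys * (x - xq)) :
    y * (xs - xp) ≤ yp * (xs - x) + ys * (x - xp) := by
  have hS1 : 0 ≤ yp * (xr - xq) + yr * (xq - xp) - yq * (xr - xp) := by linarith
  have hS2 : 0 ≤ yq * (xs - xr) + ys * (xr - xq) - yr * (xs - xq) := by linarith
  have hSK : 0 ≤ yq * (xs - x) + ys * (x - xq) - y * (xs - xq) := by linarith
  have hD : (0:ℝ) < (xr - xq) * (xs - xq) := by nlinarith
  have key : (yp * (xs - x) + ys * (x - xp) - y * (xs - xp)) * ((xr - xq) * (xs - xq))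
      = ((yp * (xr - xq) + yr * (xq - xp) - yq * (xr - xp)) * (xs - xq)
          + (yq * (xs - xr) + ys * (xr - xq) - yr * (xs - xq)) * (xq - xp)) * (xs - x)
        + (yq * (xs - x) + ys * (x - xq) - y * (xs - xq)) * ((xs - xp) * (xr - xq)) := by
    ring
  have hnn : 0 ≤ (yp * (xs - x) + ys * (x - xp) - y * (xs - xp)) * ((xr - xq) * (xs - xq)) := by
    rw [key]
    have t1 : 0 ≤ ((yp * (xr - xq) + yr * (xq - xp) - yq * (xr - xp)) * (xs - xq)
        + (yq * (xs - xr) + ys * (xr - xq) - yr * (xs - xq)) * (xq - xp)) * (xs - x) :=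
      mul_nonneg (add_nonneg (mul_nonneg hS1 (by linarith)) (mul_nonneg hS2 (by linarith)))
        (by linarith)
    have t2 : 0 ≤ (yq * (xs - x) + ys * (x - xq) - y * (xs - xq)) * ((xs - xp) * (xr - xq)) :=
      mul_nonneg hSK (mul_nonneg (by linarith) (by linarith))
    linarith
  nlinarith [hnn, hD]

/-- The Order Claim for terrains: if `p < q < r < s`, `p` sees `r` and `q` sees `s`,
then `p` sees `s`. -/
private lemma order_claim {n : ℕ} (T : Terrain n) {p q r s : Fin n}
    (hpq : p < q) (hqr : q < r) (hrs : r < s)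
    (hpr : T.Sees p r) (hqs : T.Sees q s) : T.Sees p s := by
  have hps : p < s := lt_trans (lt_trans hpq hqr) hrs
  have hx1 : (T.pt p).1 < (T.pt q).1 := T.xmono hpq
  have hx2 : (T.pt q).1 < (T.pt r).1 := T.xmono hqr
  have hx3 : (T.pt r).1 < (T.pt s).1 := T.xmono hrs
  have hminpr : min p r = p := min_eq_left (le_of_lt (lt_trans hpq hqr))
  have hmaxpr : max p r = r := max_eq_right (le_of_lt (lt_trans hpq hqr))
  have hminqs : min q s = q := min_eq_left (le_of_lt (lt_trans hqr hrs))
  have hmaxqs : max q s = s := max_eq_right (le_of_lt (lt_trans hqr hrs))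
  have H1 : (T.pt q).2 * ((T.pt r).1 - (T.pt p).1)
      ≤ (T.pt p).2 * ((T.pt r).1 - (T.pt q).1) + (T.pt r).2 * ((T.pt q).1 - (T.pt p).1) := by
    have h := hpr.2 q (by rw [hminpr]; exact le_of_lt hpq) (by rw [hmaxpr]; exact le_of_lt hqr)
    rw [hminpr, hmaxpr] at h
    exact (seg_char _ _ (lt_trans hx1 hx2) _ _ (le_of_lt hx1) (le_of_lt hx2)).mp h
  have H2 : (T.pt r).2 * ((T.pt s).1 - (T.pt q).1)
      ≤ (T.pt q).2 * ((T.pt s).1 - (T.pt r).1) + (T.pt s).2 * ((T.pt r).1 - (T.pt q).1) := by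
    have h := hqs.2 r (by rw [hminqs]; exact le_of_lt hqr) (by rw [hmaxqs]; exact le_of_lt hrs)
    rw [hminqs, hmaxqs] at h
    exact (seg_char _ _ (lt_trans hx2 hx3) _ _ (le_of_lt hx2) (le_of_lt hx3)).mp h
  refine ⟨ne_of_lt hps, ?_⟩
  have hminps : min p s = p := min_eq_left (le_of_lt hps)
  have hmaxps : max p s = s := max_eq_right (le_of_lt hps)
  rw [hminps, hmaxps]
  intro k hk1 hk2
  have hxk1 : (T.pt p).1 ≤ (T.pt k).1 := T.xmono.monotone hk1
  have hxk2 : (T.pt k).1 ≤ (T.pt s).1 := T.xmono.monotone hk2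
  rw [seg_char _ _ (by linarith : (T.pt p).1 < (T.pt s).1) _ _ hxk1 hxk2]
  rcases le_total k r with hkr | hrk
  · have hxkr : (T.pt k).1 ≤ (T.pt r).1 := T.xmono.monotone hkr
    have HK : (T.pt k).2 * ((T.pt r).1 - (T.pt p).1)
        ≤ (T.pt p).2 * ((T.pt r).1 - (T.pt k).1) + (T.pt r).2 * ((T.pt k).1 - (T.pt p).1) := by
      have h := hpr.2 k (by rw [hminpr]; exact hk1) (by rw [hmaxpr]; exact hkr)
      rw [hminpr, hmaxpr] at h
      exact (seg_char _ _ (lt_trans hx1 hx2) _ _ hxk1 hxkr).mp h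
    exact key_ineq1 _ _ _ _ _ _ _ _ _ _ hx1 hx2 hx3 hxk1 hxkr H1 H2 HK
  · have hqk : q ≤ k := le_of_lt (lt_of_lt_of_le hqr hrk)
    have hxqk : (T.pt q).1 ≤ (T.pt k).1 := T.xmono.monotone hqk
    have HK : (T.pt k).2 * ((T.pt s).1 - (T.pt q).1)
        ≤ (T.pt q).2 * ((T.pt s).1 - (T.pt k).1) + (T.pt s).2 * ((T.pt k).1 - (T.pt q).1) := by
      have h := hqs.2 k (by rw [hminqs]; exact hqk) (by rw [hmaxqs]; exact hk2)
      rw [hminqs, hmaxqs] at h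
      exact (seg_char _ _ (lt_trans hx2 hx3) _ _ hxqk hxk2).mp h
    exact key_ineq2 _ _ _ _ _ _ _ _ _ _ hx1 hx2 hx3 hxqk hxk2 H1 H2 HK

/-- The positions of the `1` entries of the universal pattern `M_2^0` (0-based indices). -/
def Pat (i j : Fin 4) : Prop :=
  ((i : ℕ), (j : ℕ)) ∈ ({(0, 0), (2, 1), (1, 2), (3, 3)} : Set (ℕ × ℕ))

/-- for a terrain visibility graph with left-right order `≺` and sets
`A ≺ B`, there are no `a_1 ≺ a_2 ≺ a_3 ≺ a_4` in `A` and `b_1 ≺ b_2 ≺ b_3 ≺ b_4` in `B`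
whose biadjacency realizes the pattern `M_2^0` or its complement `M_2^1`. -/
theorem stmt14 (n : ℕ) (T : Terrain n) (A B : Set (Fin n))
    (hAB : ∀ a ∈ A, ∀ b ∈ B, a < b) :
    ¬ ∃ a b : Fin 4 → Fin n,
      (∀ i, a i ∈ A) ∧ (∀ i, b i ∈ B) ∧ StrictMono a ∧ StrictMono b ∧
      ((∀ i j : Fin 4, T.visibilityGraph.Adj (a i) (b j) ↔ Pat i j) ∨
       (∀ i j : Fin 4, T.visibilityGraph.Adj (a i) (b j) ↔ ¬ Pat i j)) := by
  rintro ⟨a, b, hA, hB, ha, hb, hpat | hpat⟩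
  · -- pattern M_2^0 : a₁ sees b₁, a₂ sees b₃, order claim gives a₁ sees b₃
    have h1 : T.Sees (a 0) (b 0) := (hpat 0 0).mpr (by simp [Pat])
    have h2 : T.Sees (a 1) (b 2) := (hpat 1 2).mpr (by simp [Pat])
    have h3 : T.Sees (a 0) (b 2) :=
      order_claim T (ha (by decide : (0:Fin 4) < 1))
        (hAB _ (hA 1) _ (hB 0)) (hb (by decide : (0:Fin 4) < 2)) h1 h2
    have := (hpat 0 2).mp h3
    simp [Pat] at this
  · -- pattern M_2^1 : a₂ sees b₁, a₃ sees b₃, order claim gives a₂ sees b₃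
    have h1 : T.Sees (a 1) (b 0) := (hpat 1 0).mpr (by simp [Pat])
    have h2 : T.Sees (a 2) (b 2) := (hpat 2 2).mpr (by simp [Pat])
    have h3 : T.Sees (a 1) (b 2) :=
      order_claim T (ha (by decide : (1:Fin 4) < 2))
        (hAB _ (hA 2) _ (hB 0)) (hb (by decide : (0:Fin 4) < 2)) h1 h2
    have := (hpat 1 2).mp h3
    simp [Pat] at this
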